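/- arXiv:1207.3012 — 6 statements merged into one kernel-verified Lean document; each statement's English description precedes it below -/
import Mathlib

section
/- If f is convex on S with minimizer x*, satisfies f(x) - f(x*) ≥ λ‖x - x*‖^κ on S, and all subgradients on S have norm at most G, then for all x ∈ S, f(x) - f(x*) ≤ (G^κ/λ)^(1/(κ-1)). -/
open scoped RealInnerProductSpace

theorem function_error_bound
    (d : ℕ) (S : Set (EuclideanSpace ℝ (Fin d))) (hS : Convex ℝ S)
    (f : EuclideanSpace ℝ (Fin d) → ℝ) (hf : ConvexOn ℝ S f)
    (xstar : EuclideanSpace ℝ (Fin d)) (hxstar : xstar ∈ S)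
    (hmin : ∀ y ∈ S, f xstar ≤ f y)
    (lam κ G : ℝ) (hlam : 0 < lam) (hκ : 1 < κ) (hG : 0 < G)
    (hgrowth : ∀ x ∈ S, f x - f xstar ≥ lam * ‖x - xstar‖ ^ κ)
    (hsub : ∀ x ∈ S, ∃ g : EuclideanSpace ℝ (Fin d),
      (∀ y ∈ S, f y ≥ f x + ⟪g, y - x⟫) ∧ ‖g‖ ≤ G)
    (hsubbd : ∀ x ∈ S, ∀ g : EuclideanSpace ℝ (Fin d),
      (∀ y ∈ S, f y ≥ f x + ⟪g, y - x⟫) → ‖g‖ ≤ G) :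
    ∀ x ∈ S, f x - f xstar ≤ (G ^ κ / lam) ^ (1 / (κ - 1)) := by
  intro x hx
  have hκ1 : 0 < κ - 1 := by linarith
  have hκ1' : (κ - 1) ≠ 0 := ne_of_gt hκ1
  have hRHSpos : (0:ℝ) < (G ^ κ / lam) ^ (1 / (κ - 1)) := by
    apply Real.rpow_pos_of_pos
    exact div_pos (Real.rpow_pos_of_pos hG κ) hlam
  obtain ⟨g, hg1, hg2⟩ := hsub x hx
  set r : ℝ := ‖x - xstar‖ with hr
  have hr0 : 0 ≤ r := norm_nonneg _
  -- f x - f xstar ≤ G * r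
  have h1 : f x - f xstar ≤ G * r := by
    have h := hg1 xstar hxstar
    have hinner : ⟪g, xstar - x⟫ = - ⟪g, x - xstar⟫ := by
      rw [← inner_neg_right]; congr 1; abel
    have h2 : f x - f xstar ≤ ⟪g, x - xstar⟫ := by
      rw [hinner] at h; linarith
    calc f x - f xstar ≤ ⟪g, x - xstar⟫ := h2
      _ ≤ ‖g‖ * ‖x - xstar‖ := real_inner_le_norm _ _
      _ ≤ G * r := by
        apply mul_le_mul_of_nonneg_right hg2 (norm_nonneg _)
  have h2 : lam * r ^ κ ≤ f x - f xstar := hgrowth x hx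
  rcases eq_or_lt_of_le hr0 with hr0' | hrpos
  · exact le_of_lt (lt_of_le_of_lt (by rw [← hr0'] at h1; linarith) hRHSpos)
  · -- r > 0 : r ^ (κ-1) ≤ G / lam
    have hrk : lam * (r ^ (κ - 1) * r) ≤ G * r := by
      have : r ^ (κ - 1) * r = r ^ κ := by
        rw [Real.rpow_sub hrpos, Real.rpow_one]
        field_simp
      rw [this]; linarith
    have hrk2 : r ^ (κ - 1) ≤ G / lam := by
      rw [le_div_iff₀ hlam]
      have := le_of_mul_le_mul_right (by linarith [hrk] : lam * r ^ (κ - 1) * r ≤ G * r) hrpos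
      linarith
    have hrle : r ≤ (G / lam) ^ (1 / (κ - 1)) := by
      have := Real.rpow_le_rpow (Real.rpow_nonneg hr0 _) hrk2 (by positivity : (0:ℝ) ≤ 1 / (κ - 1))
      rw [one_div]; rwa [one_div, Real.rpow_rpow_inv hr0 hκ1'] at this
    have hfinal : G * (G / lam) ^ (1 / (κ - 1)) = (G ^ κ / lam) ^ (1 / (κ - 1)) := by
      have hexp : κ * (1 / (κ - 1)) = 1 + 1 / (κ - 1) := by
        field_simp
        ring
      rw [Real.div_rpow (le_of_lt (Real.rpow_pos_of_pos hG κ)) (le_of_lt hlam),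
        Real.div_rpow (le_of_lt hG) (le_of_lt hlam),
        ← Real.rpow_mul (le_of_lt hG), hexp, Real.rpow_add hG, Real.rpow_one]
      ring
    calc f x - f xstar ≤ G * r := h1
      _ ≤ G * (G / lam) ^ (1 / (κ - 1)) := by
        exact mul_le_mul_of_nonneg_left hrle (le_of_lt hG)
      _ = (G ^ κ / lam) ^ (1 / (κ - 1)) := hfinal
end

section
/- For κ ≥ 2 and all real x, y and all t ∈ [0,1], t|x|^κ + (1-t)|y|^κ ≥ |tx + (1-t)y|^κ + (2/2^κ)·t(1-t)·|x - y|^κ; i.e., the function x ↦ |x|^κ on ℝ is κ-uniformly convex with parameter λ = 4/2^κ. -/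
open Real Set

private lemma rpow_superadd {u v q : ℝ} (hu : 0 ≤ u) (hv : 0 ≤ v) (hq : 1 ≤ q) :
    u ^ q + v ^ q ≤ (u + v) ^ q := by
  have hq0 : (0:ℝ) ≤ q - 1 := by linarith
  have h1 : u ^ q ≤ u * (u + v) ^ (q - 1) := by
    have : u ^ q = u ^ (1 : ℝ) * u ^ (q - 1) := by
      rw [← Real.rpow_add' hu (by norm_num; linarith)]; ring_nf
    rw [this, Real.rpow_one]
    exact mul_le_mul_of_nonneg_left
      (Real.rpow_le_rpow hu (by linarith) hq0) hu
  have h2 : v ^ q ≤ v * (u + v) ^ (q - 1) := by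
    have : v ^ q = v ^ (1 : ℝ) * v ^ (q - 1) := by
      rw [← Real.rpow_add' hv (by norm_num; linarith)]; ring_nf
    rw [this, Real.rpow_one]
    exact mul_le_mul_of_nonneg_left
      (Real.rpow_le_rpow hv (by linarith) hq0) hv
  calc u ^ q + v ^ q ≤ (u + v) * (u + v) ^ (q - 1) := by linarith
    _ = (u + v) ^ q := by
        rw [← Real.rpow_one_add' (by positivity) (by norm_num; linarith)]; ring_nf

private lemma abs_rpow_eq_sq {κ : ℝ} (a : ℝ) : |a| ^ κ = (a ^ 2) ^ (κ / 2) := by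
  rw [← sq_abs, ← Real.rpow_natCast |a| 2, ← Real.rpow_mul (abs_nonneg a)]
  norm_num
  congr 1
  ring

private lemma clarkson {κ : ℝ} (hκ : 2 ≤ κ) (x y : ℝ) :
    |x + y| ^ κ + |x - y| ^ κ ≤ 2 ^ (κ - 1) * (|x| ^ κ + |y| ^ κ) := by
  have hqdef : κ / 2 = κ / 2 := rfl
  set q := κ / 2 with hq'
  have hq : 1 ≤ q := by rw [hq']; linarith
  have step1 : |x + y| ^ κ + |x - y| ^ κ ≤ ((x + y) ^ 2 + (x - y) ^ 2) ^ q := by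
    rw [abs_rpow_eq_sq, abs_rpow_eq_sq]
    exact rpow_superadd (sq_nonneg _) (sq_nonneg _) hq
  have sqid : (x + y) ^ 2 + (x - y) ^ 2 = 2 * (x ^ 2 + y ^ 2) := by ring
  have step2 : (x ^ 2 + y ^ 2) ^ q ≤ 2 ^ (q - 1) * ((x ^ 2) ^ q + (y ^ 2) ^ q) := by
    have hc := (convexOn_rpow hq).2 (mem_Ici.2 (sq_nonneg x)) (mem_Ici.2 (sq_nonneg y))
      (by norm_num : (0:ℝ) ≤ 1/2) (by norm_num : (0:ℝ) ≤ 1/2) (by norm_num)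
    simp only [smul_eq_mul] at hc
    have h2 : (x ^ 2 + y ^ 2) ^ q = 2 ^ q * (1/2 * x ^ 2 + 1/2 * y ^ 2) ^ q := by
      rw [← Real.mul_rpow (by norm_num) (by positivity)]
      ring_nf
    rw [h2]
    calc 2 ^ q * (1/2 * x ^ 2 + 1/2 * y ^ 2) ^ q
        ≤ 2 ^ q * (1/2 * (x ^ 2) ^ q + 1/2 * (y ^ 2) ^ q) := by
          exact mul_le_mul_of_nonneg_left hc (by positivity)
      _ = 2 ^ (q - 1) * ((x ^ 2) ^ q + (y ^ 2) ^ q) := by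
          rw [Real.rpow_sub (by norm_num) q, Real.rpow_one]; ring
  calc |x + y| ^ κ + |x - y| ^ κ ≤ ((x + y) ^ 2 + (x - y) ^ 2) ^ q := step1
    _ = 2 ^ q * (x ^ 2 + y ^ 2) ^ q := by
        rw [sqid, Real.mul_rpow (by norm_num) (by positivity)]
    _ ≤ 2 ^ q * (2 ^ (q - 1) * ((x ^ 2) ^ q + (y ^ 2) ^ q)) :=
        mul_le_mul_of_nonneg_left step2 (by positivity)
    _ = 2 ^ (κ - 1) * (|x| ^ κ + |y| ^ κ) := by
        rw [abs_rpow_eq_sq x, abs_rpow_eq_sq y, ← mul_assoc,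
          ← Real.rpow_add (by norm_num : (0:ℝ) < 2)]
        have : q + (q - 1) = κ - 1 := by rw [hq']; ring
        rw [this]

private lemma midpoint_ineq {κ : ℝ} (hκ : 2 ≤ κ) (x y : ℝ) :
    |(x + y) / 2| ^ κ + (1 / 2 ^ κ) * |x - y| ^ κ ≤ (|x| ^ κ + |y| ^ κ) / 2 := by
  have h : |(x + y) / 2| ^ κ = |x + y| ^ κ / 2 ^ κ := by
    rw [abs_div, Real.div_rpow (abs_nonneg _) (by norm_num)]
    norm_num
  have hc := clarkson hκ x y
  have h2 : (0:ℝ) < 2 ^ κ := by positivity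
  calc |(x + y) / 2| ^ κ + (1 / 2 ^ κ) * |x - y| ^ κ
      = (|x + y| ^ κ + |x - y| ^ κ) / 2 ^ κ := by rw [h]; ring
    _ ≤ (2 ^ (κ - 1) * (|x| ^ κ + |y| ^ κ)) / 2 ^ κ := by gcongr
    _ = (|x| ^ κ + |y| ^ κ) / 2 := by
        rw [Real.rpow_sub (by norm_num : (0:ℝ) < 2), Real.rpow_one]
        field_simp

private lemma convex_ineq {κ : ℝ} (hκ : 2 ≤ κ) (a b u v : ℝ) (ha : 0 ≤ a) (hb : 0 ≤ b)
    (hab : a + b = 1) : |a * u + b * v| ^ κ ≤ a * |u| ^ κ + b * |v| ^ κ := by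
  have h1 : |a * u + b * v| ≤ a * |u| + b * |v| := by
    calc |a * u + b * v| ≤ |a * u| + |b * v| := abs_add_le _ _
      _ = a * |u| + b * |v| := by rw [abs_mul, abs_mul, abs_of_nonneg ha, abs_of_nonneg hb]
  have h2 : |a * u + b * v| ^ κ ≤ (a * |u| + b * |v|) ^ κ :=
    Real.rpow_le_rpow (abs_nonneg _) h1 (by linarith)
  have hc := (convexOn_rpow (by linarith : (1:ℝ) ≤ κ)).2 (mem_Ici.2 (abs_nonneg u))
    (mem_Ici.2 (abs_nonneg v)) ha hb hab
  simp only [smul_eq_mul] at hc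
  linarith

private lemma key {κ : ℝ} (hκ : 2 ≤ κ) (x y t : ℝ) (ht0 : 0 ≤ t) (ht : t ≤ 1/2) :
    t * |x| ^ κ + (1 - t) * |y| ^ κ
      ≥ |t * x + (1 - t) * y| ^ κ + (2 / 2 ^ κ) * (t * (1 - t)) * |x - y| ^ κ := by
  have hz : t * x + (1 - t) * y = (2 * t) * ((x + y) / 2) + (1 - 2 * t) * y := by ring
  have h1 : |t * x + (1 - t) * y| ^ κ
      ≤ (2 * t) * |(x + y) / 2| ^ κ + (1 - 2 * t) * |y| ^ κ := by
    rw [hz]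
    exact convex_ineq hκ _ _ _ _ (by linarith) (by linarith) (by ring)
  have h2 := midpoint_ineq hκ x y
  have h2t : (0:ℝ) ≤ 2 * t := by linarith
  have h3 : (2 * t) * |(x + y) / 2| ^ κ
      ≤ (2 * t) * ((|x| ^ κ + |y| ^ κ) / 2 - (1 / 2 ^ κ) * |x - y| ^ κ) :=
    mul_le_mul_of_nonneg_left (by linarith) h2t
  have h4 : (2 / 2 ^ κ) * (t * (1 - t)) * |x - y| ^ κ
      ≤ (2 * t) * ((1 / 2 ^ κ) * |x - y| ^ κ) := by
    have hp : (0:ℝ) ≤ |x - y| ^ κ := Real.rpow_nonneg (abs_nonneg _) κ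
    have h2κ : (0:ℝ) < 2 ^ κ := by positivity
    have htt : t * (1 - t) ≤ t := by nlinarith
    have : (2 / 2 ^ κ) * (t * (1 - t)) ≤ 2 * t * (1 / 2 ^ κ) := by
      have := mul_le_mul_of_nonneg_left htt (by positivity : (0:ℝ) ≤ 2 / 2 ^ κ)
      calc (2 / 2 ^ κ) * (t * (1 - t)) ≤ (2 / 2 ^ κ) * t := this
        _ = 2 * t * (1 / 2 ^ κ) := by ring
    calc (2 / 2 ^ κ) * (t * (1 - t)) * |x - y| ^ κ
        ≤ 2 * t * (1 / 2 ^ κ) * |x - y| ^ κ := mul_le_mul_of_nonneg_right this hp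
      _ = (2 * t) * ((1 / 2 ^ κ) * |x - y| ^ κ) := by ring
  linarith

theorem abs_rpow_uniformly_convex
    (κ : ℝ) (hκ : 2 ≤ κ) :
    ∀ (x y t : ℝ), 0 ≤ t → t ≤ 1 →
      t * |x| ^ κ + (1 - t) * |y| ^ κ
        ≥ |t * x + (1 - t) * y| ^ κ + (2 / 2 ^ κ) * (t * (1 - t)) * |x - y| ^ κ := by
  intro x y t ht0 ht1
  rcases le_or_gt t (1/2) with h | h
  · exact key hκ x y t ht0 h
  · have h' := key hκ y x (1 - t) (by linarith) (by linarith)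
    have e1 : (1 - t) * y + (1 - (1 - t)) * x = t * x + (1 - t) * y := by ring
    have e2 : |y - x| = |x - y| := abs_sub_comm y x
    rw [e1, e2] at h'
    have e3 : (1 - t) * (1 - (1 - t)) = t * (1 - t) := by ring
    rw [e3] at h'
    linarith
end

section
/- For κ ≥ 2 and all real x, y, the midpoint inequality (1/2)|x|^κ + (1/2)|y|^κ ≥ |(x+y)/2|^κ + |(x-y)/2|^κ holds. -/
open NNReal

lemma aux_nnreal (κ : ℝ) (hκ : 2 ≤ κ) (A B : ℝ≥0) :
    A ^ κ + B ^ κ ≤ (A ^ (2:ℝ) + B ^ (2:ℝ)) ^ (κ / 2) := by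
  have hκ0 : 0 < κ := lt_of_lt_of_le two_pos hκ
  have h := NNReal.rpow_add_rpow_le A B two_pos hκ
  have h2 : ((A ^ κ + B ^ κ) ^ (1/κ)) ^ κ ≤ ((A ^ (2:ℝ) + B ^ (2:ℝ)) ^ (1/(2:ℝ))) ^ κ :=
    NNReal.rpow_le_rpow h hκ0.le
  rwa [← NNReal.rpow_mul, ← NNReal.rpow_mul, one_div_mul_cancel hκ0.ne',
    NNReal.rpow_one, one_div, inv_mul_eq_div] at h2

theorem abs_rpow_midpoint_inequality
    (κ : ℝ) (hκ : 2 ≤ κ) (x y : ℝ) :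
    (1 / 2) * |x| ^ κ + (1 / 2) * |y| ^ κ
      ≥ |(x + y) / 2| ^ κ + |(x - y) / 2| ^ κ := by
  have hκ0 : 0 < κ := lt_of_lt_of_le two_pos hκ
  set a := |(x + y) / 2| with ha
  set b := |(x - y) / 2| with hb
  have ha0 : 0 ≤ a := abs_nonneg _
  have hb0 : 0 ≤ b := abs_nonneg _
  -- Step 1: a^κ + b^κ ≤ (a^2 + b^2)^(κ/2)
  have step1 : a ^ κ + b ^ κ ≤ (a ^ (2:ℝ) + b ^ (2:ℝ)) ^ (κ / 2) := by
    have := aux_nnreal κ hκ a.toNNReal b.toNNReal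
    have h := NNReal.coe_le_coe.2 this
    push_cast at h
    rwa [Real.coe_toNNReal a ha0, Real.coe_toNNReal b hb0] at h
  -- Step 2: a^2 + b^2 = (|x|^2 + |y|^2)/2
  have step2 : a ^ (2:ℝ) + b ^ (2:ℝ) = (1/2) * |x| ^ (2:ℝ) + (1/2) * |y| ^ (2:ℝ) := by
    rw [ha, hb, Real.rpow_two, Real.rpow_two, Real.rpow_two, Real.rpow_two,
      sq_abs, sq_abs, sq_abs, sq_abs]
    ring
  -- Step 3: convexity
  have step3 : ((1/2) * |x| ^ (2:ℝ) + (1/2) * |y| ^ (2:ℝ)) ^ (κ / 2)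
      ≤ (1/2) * |x| ^ κ + (1/2) * |y| ^ κ := by
    have hp : (1:ℝ) ≤ κ / 2 := by linarith
    have := NNReal.rpow_arith_mean_le_arith_mean2_rpow (1/2) (1/2)
      (|x|.toNNReal ^ (2:ℝ)) (|y|.toNNReal ^ (2:ℝ)) (add_halves 1) hp
    rw [← NNReal.rpow_mul, ← NNReal.rpow_mul] at this
    have hm : (2:ℝ) * (κ / 2) = κ := by ring
    rw [hm] at this
    have h := NNReal.coe_le_coe.2 this
    push_cast at h
    rwa [Real.coe_toNNReal _ (abs_nonneg x), Real.coe_toNNReal _ (abs_nonneg y)] at h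
  calc a ^ κ + b ^ κ ≤ (a ^ (2:ℝ) + b ^ (2:ℝ)) ^ (κ / 2) := step1
    _ = ((1/2) * |x| ^ (2:ℝ) + (1/2) * |y| ^ (2:ℝ)) ^ (κ / 2) := by rw [step2]
    _ ≤ (1/2) * |x| ^ κ + (1/2) * |y| ^ κ := step3
end

section
/- Let f : ℝ → ℝ be convex and suppose that for some λ > 0 and κ ≥ 2, the midpoint inequality (1/2)f(x) + (1/2)f(y) ≥ f((x+y)/2) + (λ/4)|x-y|^κ holds for all x, y. Then for all x, y and all t ∈ [0,1], t f(x) + (1-t) f(y) ≥ f(tx+(1-t)y) + (λ/4) t(1-t) |x-y|^κ. (Midpoint uniform convexity plus convexity implies uniform convexity with halved constant.) -/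
theorem aux_half
    (f : ℝ → ℝ) (hf : ConvexOn ℝ Set.univ f)
    (lam κ : ℝ) (hlam : 0 < lam)
    (hmid : ∀ x y : ℝ,
      (1 / 2) * f x + (1 / 2) * f y ≥ f ((x + y) / 2) + (lam / 4) * |x - y| ^ κ) :
    ∀ (x y t : ℝ), 0 ≤ t → t ≤ 1 / 2 →
      t * f x + (1 - t) * f y
        ≥ f (t * x + (1 - t) * y) + (lam / 4) * t * (1 - t) * |x - y| ^ κ := by
  intro x y t ht0 ht2
  have hm := hmid x y
  have hc := hf.2 (Set.mem_univ ((x + y) / 2)) (Set.mem_univ y)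
    (by linarith : (0:ℝ) ≤ 2 * t) (by linarith : (0:ℝ) ≤ 1 - 2 * t) (by ring)
  simp only [smul_eq_mul] at hc
  have hp : (2 * t) * ((x + y) / 2) + (1 - 2 * t) * y = t * x + (1 - t) * y := by ring
  rw [hp] at hc
  have hA : (0:ℝ) ≤ |x - y| ^ κ := by positivity
  nlinarith [mul_nonneg ht0 hA, mul_nonneg (mul_nonneg ht0 ht0) hA]

theorem midpoint_uniform_convexity_implies_uniform_convexity
    (f : ℝ → ℝ) (hf : ConvexOn ℝ Set.univ f)
    (lam κ : ℝ) (hlam : 0 < lam) (hκ : 2 ≤ κ)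
    (hmid : ∀ x y : ℝ,
      (1 / 2) * f x + (1 / 2) * f y ≥ f ((x + y) / 2) + (lam / 4) * |x - y| ^ κ) :
    ∀ (x y t : ℝ), 0 ≤ t → t ≤ 1 →
      t * f x + (1 - t) * f y
        ≥ f (t * x + (1 - t) * y) + (lam / 4) * t * (1 - t) * |x - y| ^ κ := by
  intro x y t ht0 ht1
  rcases le_or_gt t (1 / 2) with h | h
  · exact aux_half f hf lam κ hlam hmid x y t ht0 h
  · have := aux_half f hf lam κ hlam hmid y x (1 - t) (by linarith) (by linarith)
    have hswap : |y - x| = |x - y| := abs_sub_comm y x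
    rw [hswap] at this
    have hp : (1 - t) * y + (1 - (1 - t)) * x = t * x + (1 - t) * y := by ring
    rw [hp] at this
    nlinarith [this]
end

section
/- For any κ > 1 with κ < 2, no twice continuously differentiable function f : ℝ → ℝ can satisfy the uniform convexity condition f(y) ≥ f(x) + f'(x)(y-x) + (λ/2)|x-y|^κ for all x, y in an open interval, for any λ > 0. -/
open Filter Topology

theorem no_uniform_convexity_below_two
    (f : ℝ → ℝ) (a b : ℝ) (hab : a < b)
    (hf : ContDiffOn ℝ 2 f (Set.Ioo a b))
    (lam κ : ℝ) (hlam : 0 < lam) (hκ1 : 1 < κ) (hκ2 : κ < 2)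
    (hUC : ∀ x ∈ Set.Ioo a b, ∀ y ∈ Set.Ioo a b,
      f y - f x - deriv f x * (y - x) ≥ (lam / 2) * |y - x| ^ κ) :
    False := by
  set x₀ : ℝ := (a + b) / 2 with hx₀def
  have hx₀ : x₀ ∈ Set.Ioo a b := ⟨by simp only [hx₀def]; linarith, by simp only [hx₀def]; linarith⟩
  set g : ℝ → ℝ := deriv f with hgdef
  have hgd : DifferentiableAt ℝ g x₀ := by
    have h1 : ContDiffOn ℝ (2 - 1 : ℕ∞) g (Set.Ioo a b) :=
      hf.deriv_of_isOpen isOpen_Ioo (by decide)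
    have h1' : ContDiffOn ℝ 1 g (Set.Ioo a b) := by norm_num at h1; exact h1
    exact (h1'.differentiableOn one_ne_zero).differentiableAt (isOpen_Ioo.mem_nhds hx₀)
  obtain ⟨C, hC⟩ := (hgd.hasDerivAt.isBigO_sub).bound
  -- key: for y ∈ Ioo a b, (g y - g x₀) * (y - x₀) ≥ lam * |y - x₀| ^ κ
  have key : ∀ y ∈ Set.Ioo a b, (g y - g x₀) * (y - x₀) ≥ lam * |y - x₀| ^ κ := by
    intro y hy
    have h1 := hUC x₀ hx₀ y hy
    have h2 := hUC y hy x₀ hx₀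
    have habs : |x₀ - y| = |y - x₀| := abs_sub_comm _ _
    rw [habs] at h2
    have := add_le_add h1 h2
    nlinarith [this]
  -- eventually along 𝓝[>] x₀
  have F := nhdsGT_neBot x₀
  have e1 : ∀ᶠ y in 𝓝[>] x₀, y ∈ Set.Ioo a b :=
    eventually_nhdsWithin_of_eventually_nhds (isOpen_Ioo.eventually_mem hx₀)
  have e2 : ∀ᶠ y in 𝓝[>] x₀, ‖g y - g x₀‖ ≤ C * ‖y - x₀‖ :=
    eventually_nhdsWithin_of_eventually_nhds hC
  have e3 : ∀ᶠ y in 𝓝[>] x₀, C * (y - x₀) ^ (2 - κ) < lam := by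
    have ht : Filter.Tendsto (fun y : ℝ => C * (y - x₀) ^ (2 - κ)) (𝓝[>] x₀) (𝓝 (C * 0 ^ (2 - κ))) := by
      apply Filter.Tendsto.const_mul
      have hcont : ContinuousAt (fun t : ℝ => t ^ (2 - κ)) 0 :=
        Real.continuousAt_rpow_const 0 (2 - κ) (Or.inr (by linarith))
      have hsub : Filter.Tendsto (fun y : ℝ => y - x₀) (𝓝[>] x₀) (𝓝 0) := by
        have : Filter.Tendsto (fun y : ℝ => y - x₀) (𝓝 x₀) (𝓝 (x₀ - x₀)) :=
          (continuous_id.sub continuous_const).continuousAt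
        simpa using this.mono_left nhdsWithin_le_nhds
      exact hcont.tendsto.comp hsub
    rw [Real.zero_rpow (by linarith), mul_zero] at ht
    exact ht.eventually_lt_const hlam
  have e4 : ∀ᶠ y in 𝓝[>] x₀, x₀ < y := eventually_mem_nhdsWithin
  obtain ⟨y, hy1, hy2, hy3, hy4⟩ := (e1.and (e2.and (e3.and e4))).exists
  set h : ℝ := y - x₀ with hhdef
  have hh : 0 < h := by simp [hhdef]; linarith [hy4]
  have habs : |y - x₀| = h := abs_of_pos hh
  have hkey := key y hy1
  rw [habs] at hkey
  have hbound : |g y - g x₀| ≤ C * h := by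
    simpa [Real.norm_eq_abs, habs, abs_of_pos hh] using hy2
  have h1 : lam * h ^ κ ≤ (g y - g x₀) * h := hkey
  have h2 : (g y - g x₀) * h ≤ |g y - g x₀| * h := by
    apply mul_le_mul_of_nonneg_right (le_abs_self _) hh.le
  have h3 : |g y - g x₀| * h ≤ C * h * h := by
    apply mul_le_mul_of_nonneg_right hbound hh.le
  -- C * h * h = C * h^(2-κ) * h^κ < lam * h^κ
  have hpow : h * h = h ^ (2 - κ) * h ^ κ := by
    rw [← Real.rpow_add hh, show (2 - κ + κ) = (2:ℝ) by ring, Real.rpow_two]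
    ring
  have hκpos : (0:ℝ) < h ^ κ := Real.rpow_pos_of_pos hh κ
  have h4 : C * h * h < lam * h ^ κ := by
    calc C * h * h = (C * h ^ (2 - κ)) * h ^ κ := by rw [mul_assoc, hpow]; ring
    _ < lam * h ^ κ := by exact mul_lt_mul_of_pos_right hy3 hκpos
  linarith
end

section
/- The function f₁ : ℝ^d → ℝ defined piecewise by f₁(x) = c₁(Σᵢ |x̃ᵢ|^κ + c₂) for x₁ ≤ 4a (where x̃ = x - 2a·e₁) and f₁(x) = c₁ Σᵢ |xᵢ|^κ for x₁ > 4a, with c₂ = (4a)^κ - (2a)^κ, is continuous and convex on ℝ^d, for any a > 0, κ > 1, c₁ > 0. -/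
open Set Finset

/-- Convexity of `|u| ^ κ` for `κ ≥ 1`. -/
lemma aux_convexOn_abs_rpow {κ : ℝ} (hκ : 1 ≤ κ) :
    ConvexOn ℝ Set.univ (fun u : ℝ => |u| ^ κ) := by
  refine ⟨convex_univ, fun x _ y _ α β hα hβ hab => ?_⟩
  have h1 : |α • x + β • y| ≤ α * |x| + β * |y| := by
    simp only [smul_eq_mul]
    refine (abs_add_le _ _).trans ?_
    rw [abs_mul, abs_mul, abs_of_nonneg hα, abs_of_nonneg hβ]
  have h2 := (convexOn_rpow hκ).2 (Set.mem_Ici.2 (abs_nonneg x))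
    (Set.mem_Ici.2 (abs_nonneg y)) hα hβ hab
  simp only [smul_eq_mul] at h2 ⊢
  calc |α • x + β • y| ^ κ ≤ (α * |x| + β * |y|) ^ κ :=
        Real.rpow_le_rpow (abs_nonneg _) h1 (by linarith)
    _ ≤ α * |x| ^ κ + β * |y| ^ κ := h2

/-- Majorization inequality for a convex function on ℝ. -/
lemma aux_quad {ψ : ℝ → ℝ} (hψ : ConvexOn ℝ Set.univ ψ) {m u v M : ℝ}
    (hmu : m ≤ u) (huM : u ≤ M) (hmv : m ≤ v) (hsum : u + v = m + M) :
    ψ u + ψ v ≤ ψ m + ψ M := by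
  rcases eq_or_lt_of_le (hmu.trans huM) with h | h
  · have hu : u = m := le_antisymm (h ▸ huM) hmu
    have hv : v = M := by linarith
    rw [hu, hv]
  · have hMm : 0 < M - m := by linarith
    set α := (M - u) / (M - m) with hαdef
    set β := (u - m) / (M - m) with hβdef
    have hα : 0 ≤ α := div_nonneg (by linarith) hMm.le
    have hβ : 0 ≤ β := div_nonneg (by linarith) hMm.le
    have hab : α + β = 1 := by
      rw [hαdef, hβdef, ← add_div, div_eq_one_iff_eq hMm.ne']
      ring
    have h1 := hψ.2 (Set.mem_univ m) (Set.mem_univ M) hα hβ hab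
    have h2 := hψ.2 (Set.mem_univ m) (Set.mem_univ M) hβ hα (by linarith)
    have hu : α • m + β • M = u := by
      simp only [smul_eq_mul, hαdef, hβdef]
      field_simp
      ring
    have hv : β • m + α • M = v := by
      simp only [smul_eq_mul, hαdef, hβdef]
      field_simp
      linear_combination (m - M) * hsum
    rw [hu] at h1; rw [hv] at h2
    simp only [smul_eq_mul] at h1 h2
    calc ψ u + ψ v ≤ (α * ψ m + β * ψ M) + (β * ψ m + α * ψ M) := add_le_add h1 h2
      _ = (α + β) * (ψ m + ψ M) := by ring
      _ = ψ m + ψ M := by rw [hab, one_mul]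

/-- Convexity of a translated sum of `κ`-th powers on Euclidean space. -/
lemma aux_sum_convex {d : ℕ} {κ : ℝ} (hκ : 1 ≤ κ) (b : Fin d → ℝ) :
    ConvexOn ℝ Set.univ (fun x : EuclideanSpace ℝ (Fin d) => ∑ i, |x i - b i| ^ κ) := by
  have hψ := aux_convexOn_abs_rpow hκ
  refine ⟨convex_univ, fun x _ y _ α β hα hβ hab => ?_⟩
  simp only [smul_eq_mul]
  have hterm : ∀ i : Fin d,
      |(α • x + β • y) i - b i| ^ κ ≤ α * |x i - b i| ^ κ + β * |y i - b i| ^ κ := by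
    intro i
    have hpt : (α • x + β • y) i - b i = α * (x i - b i) + β * (y i - b i) := by
      simp only [PiLp.add_apply, PiLp.smul_apply, smul_eq_mul]
      linear_combination (b i) * hab
    have := hψ.2 (Set.mem_univ (x i - b i)) (Set.mem_univ (y i - b i)) hα hβ hab
    simp only [smul_eq_mul] at this
    rw [hpt]
    exact this
  calc (∑ i, |(α • x + β • y) i - b i| ^ κ)
      ≤ ∑ i, (α * |x i - b i| ^ κ + β * |y i - b i| ^ κ) :=
        Finset.sum_le_sum fun i _ => hterm i
    _ = α * (∑ i, |x i - b i| ^ κ) + β * (∑ i, |y i - b i| ^ κ) := by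
        rw [Finset.sum_add_distrib, Finset.mul_sum, Finset.mul_sum]

theorem piecewise_f1_continuous_convex
    (d : ℕ) (hd : 0 < d) (κ a c₁ : ℝ) (hκ : 1 < κ) (ha : 0 < a) (hc₁ : 0 < c₁)
    (c₂ : ℝ) (hc₂ : c₂ = (4 * a) ^ κ - (2 * a) ^ κ)
    (e₁ : EuclideanSpace ℝ (Fin d)) (he₁ : e₁ = EuclideanSpace.single ⟨0, hd⟩ 1)
    (f₁ : EuclideanSpace ℝ (Fin d) → ℝ)
    (hf₁ : ∀ x, f₁ x =
      if x ⟨0, hd⟩ ≤ 4 * a then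
        c₁ * ((∑ i, |(x - (2 * a) • e₁) i| ^ κ) + c₂)
      else
        c₁ * ∑ i, |x i| ^ κ) :
    Continuous f₁ ∧ ConvexOn ℝ Set.univ f₁ := by
  set i₀ : Fin d := ⟨0, hd⟩ with hi₀
  set b : Fin d → ℝ := fun i => if i = i₀ then 2 * a else 0 with hb
  have hψ := aux_convexOn_abs_rpow hκ.le
  -- the translated coordinates
  have hsub : ∀ (x : EuclideanSpace ℝ (Fin d)) (i : Fin d),
      (x - (2 * a) • e₁) i = x i - b i := by
    intro x i
    simp only [PiLp.sub_apply, PiLp.smul_apply, smul_eq_mul, he₁,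
      EuclideanSpace.single_apply, hb]
    split_ifs <;> ring
  -- key one-dimensional inequalities
  have key1 : ∀ t : ℝ, t ≤ 4 * a → |t| ^ κ ≤ |t - 2 * a| ^ κ + c₂ := by
    intro t ht
    have h := aux_quad hψ (m := t - 2 * a) (u := t) (v := 2 * a) (M := 4 * a)
      (by linarith) ht (by linarith) (by ring)
    rw [abs_of_nonneg (by linarith : (0:ℝ) ≤ 2 * a),
      abs_of_nonneg (by linarith : (0:ℝ) ≤ 4 * a)] at h
    rw [hc₂]; linarith
  have key2 : ∀ t : ℝ, 4 * a ≤ t → |t - 2 * a| ^ κ + c₂ ≤ |t| ^ κ := by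
    intro t ht
    have h := aux_quad hψ (m := 2 * a) (u := t - 2 * a) (v := 4 * a) (M := t)
      (by linarith) (by linarith) (by linarith) (by ring)
    rw [abs_of_nonneg (by linarith : (0:ℝ) ≤ 2 * a),
      abs_of_nonneg (by linarith : (0:ℝ) ≤ 4 * a)] at h
    rw [hc₂]; linarith
  -- comparison of the two sums
  have hcomp1 : ∀ x : EuclideanSpace ℝ (Fin d), x i₀ ≤ 4 * a →
      (∑ i, |x i| ^ κ) ≤ (∑ i, |x i - b i| ^ κ) + c₂ := by
    intro x hx
    have e1 : (∑ i, |x i| ^ κ)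
        = |x i₀| ^ κ + ∑ i ∈ Finset.univ.erase i₀, |x i| ^ κ :=
      (Finset.add_sum_erase _ _ (Finset.mem_univ i₀)).symm
    have e2 : (∑ i, |x i - b i| ^ κ)
        = |x i₀ - b i₀| ^ κ + ∑ i ∈ Finset.univ.erase i₀, |x i - b i| ^ κ :=
      (Finset.add_sum_erase _ _ (Finset.mem_univ i₀)).symm
    have e3 : ∑ i ∈ Finset.univ.erase i₀, |x i - b i| ^ κ
        = ∑ i ∈ Finset.univ.erase i₀, |x i| ^ κ := by
      refine Finset.sum_congr rfl fun i hi => ?_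
      have : b i = 0 := by simp [hb, Finset.ne_of_mem_erase hi]
      rw [this, sub_zero]
    have hb0 : b i₀ = 2 * a := by simp [hb]
    rw [e1, e2, e3, hb0]
    have := key1 (x i₀) hx
    linarith
  have hcomp2 : ∀ x : EuclideanSpace ℝ (Fin d), 4 * a ≤ x i₀ →
      (∑ i, |x i - b i| ^ κ) + c₂ ≤ ∑ i, |x i| ^ κ := by
    intro x hx
    have e1 : (∑ i, |x i| ^ κ)
        = |x i₀| ^ κ + ∑ i ∈ Finset.univ.erase i₀, |x i| ^ κ :=
      (Finset.add_sum_erase _ _ (Finset.mem_univ i₀)).symm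
    have e2 : (∑ i, |x i - b i| ^ κ)
        = |x i₀ - b i₀| ^ κ + ∑ i ∈ Finset.univ.erase i₀, |x i - b i| ^ κ :=
      (Finset.add_sum_erase _ _ (Finset.mem_univ i₀)).symm
    have e3 : ∑ i ∈ Finset.univ.erase i₀, |x i - b i| ^ κ
        = ∑ i ∈ Finset.univ.erase i₀, |x i| ^ κ := by
      refine Finset.sum_congr rfl fun i hi => ?_
      have : b i = 0 := by simp [hb, Finset.ne_of_mem_erase hi]
      rw [this, sub_zero]
    have hb0 : b i₀ = 2 * a := by simp [hb]
    rw [e1, e2, e3, hb0]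
    have := key2 (x i₀) hx
    linarith
  -- f₁ equals a max of two convex continuous functions
  set G : EuclideanSpace ℝ (Fin d) → ℝ :=
    fun x => c₁ * ((∑ i, |x i - b i| ^ κ) + c₂) with hG
  set H : EuclideanSpace ℝ (Fin d) → ℝ :=
    fun x => c₁ * ∑ i, |x i| ^ κ with hH
  have hEq : f₁ = fun x => max (G x) (H x) := by
    funext x
    rw [hf₁]
    simp only [hsub x]
    split_ifs with hx
    · exact (max_eq_left (mul_le_mul_of_nonneg_left (hcomp1 x hx) hc₁.le)).symm
    · exact (max_eq_right (mul_le_mul_of_nonneg_left (hcomp2 x (le_of_not_ge hx)) hc₁.le)).symm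
  have hκ0 : (0:ℝ) ≤ κ := by linarith
  -- continuity
  have hcont : ∀ c : Fin d → ℝ, Continuous
      (fun x : EuclideanSpace ℝ (Fin d) => ∑ i, |x i - c i| ^ κ) := by
    intro c
    refine continuous_finset_sum _ fun i _ => ?_
    exact (((EuclideanSpace.proj i).continuous.sub continuous_const).abs).rpow_const
      fun x => Or.inr hκ0
  have hGcont : Continuous G := continuous_const.mul ((hcont b).add continuous_const)
  have hHcont : Continuous H := by
    have := hcont (fun _ => 0)
    simp only [sub_zero] at this
    exact continuous_const.mul this
  constructor
  · rw [hEq]; exact hGcont.max hHcont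
  · rw [hEq]
    have hGconv : ConvexOn ℝ Set.univ G := by
      have h1 : ConvexOn ℝ Set.univ
          (fun x : EuclideanSpace ℝ (Fin d) => (∑ i, |x i - b i| ^ κ) + c₂) :=
        (aux_sum_convex hκ.le b).add (convexOn_const c₂ convex_univ)
      exact h1.smul hc₁.le
    have hHconv : ConvexOn ℝ Set.univ H := by
      have h1 := aux_sum_convex (d := d) hκ.le (fun _ => 0)
      simp only [sub_zero] at h1
      exact h1.smul hc₁.le
    exact hGconv.sup hHconv
end
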